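/- arXiv:2201.03367 — 3 statements merged into one kernel-verified Lean document; each statement's English description precedes it below -/
import Mathlib

section
/- Let I be a finite nonempty index set and let (X_i)_{i∈I} be independent real-valued random variables, X_i having finite fourth moment, mean μ_i and variance σ_i² > 0. For each i ∈ I let X_i^{(1)},…,X_i^{(R_i)} be i.i.d. copies of X_i with R_i ≥ 1, all mutually independent and independent of (X_i)_{i∈I}; set X̄_i = (1/R_i)Σ_k X_i^{(k)} and X̃_i = X_i − X̄_i, and define σ̄² = (1/|I|)Σ_{i∈I} σ_i² and γ² = ((1/|I|)Σ_{i∈I} σ_i⁴ − σ̄⁴)/σ̄⁴. Suppose Kurt(X̃_i) ≤ κ̃ for every i ∈ I. Then Σ_{i∈I} E[X̃_i⁴] / (Σ_{i∈I} Var(X̃_i))² ≤ 4·κ̃·(γ² + 1)/|I|. -/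
open MeasureTheory ProbabilityTheory

/-- Kurtosis `E[(W − EW)⁴]/Var(W)²` of a real random variable. -/
noncomputable def kurt {Ω : Type*} [MeasurableSpace Ω] (P : Measure Ω) (W : Ω → ℝ) : ℝ :=
  (∫ ω, (W ω - ∫ ω', W ω' ∂P) ^ 4 ∂P) / (variance W P) ^ 2

/-- The Monte Carlo mean of `R` simulated realisations. -/
noncomputable def sampleMean {Ω : Type*} {R : ℕ} (Xc : Fin R → Ω → ℝ) (ω : Ω) : ℝ :=
  (R : ℝ)⁻¹ * ∑ k, Xc k ω

/-- `iIndepFun` is invariant under a.e. modification of each coordinate. -/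
lemma iIndepFun_congr_ae {Ω ι : Type*} [MeasurableSpace Ω] {μ : Measure Ω}
    {β : ι → Type*} {m : ∀ i, MeasurableSpace (β i)} {f g : ∀ i, Ω → β i}
    (hf : ProbabilityTheory.iIndepFun (m := m) f μ) (h : ∀ i, f i =ᵐ[μ] g i) :
    ProbabilityTheory.iIndepFun (m := m) g μ := by
  rw [ProbabilityTheory.iIndepFun_iff_measure_inter_preimage_eq_mul] at hf ⊢
  intro S sets hsets
  have key : ∀ i : ι, μ (g i ⁻¹' sets i) = μ (f i ⁻¹' sets i) := by
    intro i
    apply measure_congr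
    filter_upwards [h i] with ω hω
    change (g i ω ∈ sets i) = (f i ω ∈ sets i)
    rw [hω]
  have key2 : μ (⋂ i ∈ S, g i ⁻¹' sets i) = μ (⋂ i ∈ S, f i ⁻¹' sets i) := by
    apply measure_congr
    have hS : ∀ᵐ ω ∂μ, ∀ i ∈ (S : Set ι), f i ω = g i ω :=
      (MeasureTheory.ae_ball_iff (S : Set ι).to_countable).2 fun i _ => h i
    filter_upwards [hS] with ω hω
    change (ω ∈ ⋂ i ∈ S, g i ⁻¹' sets i) = (ω ∈ ⋂ i ∈ S, f i ⁻¹' sets i)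
    simp only [eq_iff_iff, Set.mem_iInter, Set.mem_preimage]
    constructor
    · intro hmem i hi
      rw [hω i (Finset.mem_coe.mpr hi)]; exact hmem i hi
    · intro hmem i hi
      rw [← hω i (Finset.mem_coe.mpr hi)]; exact hmem i hi
  rw [key2, hf S hsets]
  exact Finset.prod_congr rfl fun i _ => (key i).symm

/-- Bound on the Lyapunov ratio (with δ = 2) for the mean-zero summands
`X̃_i = X_i − X̄_i` of the prediction error:
`Σ_i E[X̃_i⁴] / (Σ_i Var X̃_i)² ≤ 4 κ̃ (γ² + 1)/|I|`. -/
theorem lyapunov_ratio_bound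
    {Ω : Type*} [MeasurableSpace Ω] (P : Measure Ω) [IsProbabilityMeasure P]
    {I : Type*} [Fintype I] [Nonempty I]
    (X : I → Ω → ℝ) (R : I → ℕ) (hR : ∀ i, 1 ≤ R i)
    (Xc : (i : I) → Fin (R i) → Ω → ℝ)
    (hXmeas : ∀ i, Measurable (X i)) (hX4 : ∀ i, MemLp (X i) 4 P)
    (hXvar : ∀ i, 0 < variance (X i) P)
    -- the `X_i` and all the i.i.d. copies are mutually independent
    (hIndep : iIndepFun (β := fun _ => ℝ)
      (fun j : I ⊕ (Σ i : I, Fin (R i)) =>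
        match j with
        | .inl i => X i
        | .inr ⟨i, k⟩ => Xc i k) P)
    -- the copies are identically distributed with the originals
    (hid : ∀ i k, IdentDistrib (Xc i k) (X i) P P)
    -- average account-level variance and squared coefficient of variation of the variances
    (σbar2 : ℝ) (hσbar2 : σbar2 = (Fintype.card I : ℝ)⁻¹ * ∑ i, variance (X i) P)
    (γ2 : ℝ)
    (hγ2 : γ2 = ((Fintype.card I : ℝ)⁻¹ * ∑ i, (variance (X i) P) ^ 2 - σbar2 ^ 2) / σbar2 ^ 2)
    -- uniform kurtosis bound on the prediction errors
    (κtilde : ℝ) (hκ : ∀ i, kurt P (fun ω => X i ω - sampleMean (Xc i) ω) ≤ κtilde) :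
    (∑ i, ∫ ω, (X i ω - sampleMean (Xc i) ω) ^ 4 ∂P)
        / (∑ i, variance (fun ω => X i ω - sampleMean (Xc i) ω) P) ^ 2
      ≤ 4 * κtilde * (γ2 + 1) / (Fintype.card I : ℝ) := by
  classical
  -- measurable modifications of the copies
  have hZ : ∀ i k, ∃ Z : Ω → ℝ, Measurable Z ∧ Xc i k =ᵐ[P] Z := fun i k =>
    ⟨(hid i k).aemeasurable_fst.mk (Xc i k), (hid i k).aemeasurable_fst.measurable_mk,
      (hid i k).aemeasurable_fst.ae_eq_mk⟩
  choose Z hZmeas hZae using fun i => hZ i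
  have hZid : ∀ i k, IdentDistrib (Z i k) (X i) P P := fun i k =>
    ((IdentDistrib.of_ae_eq (hid i k).aemeasurable_fst (hZae i k)).symm).trans (hid i k)
  -- the independent measurable family
  set g : (I ⊕ (Σ i : I, Fin (R i))) → Ω → ℝ := fun j =>
    match j with
    | .inl i => X i
    | .inr ⟨i, k⟩ => Z i k with hgdef
  have hgIndep : iIndepFun g P := by
    refine iIndepFun_congr_ae hIndep ?_
    rintro (i | ⟨i, k⟩)
    · exact Filter.EventuallyEq.rfl
    · exact hZae i k
  have hgmeas : ∀ j, Measurable (g j) := by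
    rintro (i | ⟨i, k⟩)
    · exact hXmeas i
    · exact hZmeas i k
  -- integrability facts
  have hX2 : ∀ i, MemLp (X i) 2 P := fun i =>
    (hX4 i).mono_exponent (by norm_num)
  have hZ2 : ∀ i k, MemLp (Z i k) 2 P := fun i k => (hZid i k).symm.memLp_snd (hX2 i)
  have hn1 : ∀ i, (1 : ℝ) ≤ (R i : ℝ) := fun i => by exact_mod_cast hR i
  have hnpos : ∀ i, (0 : ℝ) < (R i : ℝ) := fun i => lt_of_lt_of_le one_pos (hn1 i)
  -- variance computation
  have hvar : ∀ i, variance (fun ω => X i ω - sampleMean (Xc i) ω) P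
      = variance (X i) P + (R i : ℝ)⁻¹ * variance (X i) P := by
    intro i
    set c : ℝ := ((R i : ℕ) : ℝ)⁻¹ with hc
    set Ssum : Ω → ℝ := ∑ k, Z i k with hSsum
    have hSsum_apply : ∀ ω, Ssum ω = ∑ k, Z i k ω := by
      intro ω; simp [hSsum, Finset.sum_apply]
    have hSsum_fun : Ssum = fun ω => ∑ k, Z i k ω := funext fun ω => by
      simp [hSsum, Finset.sum_apply]
    have hSsum_meas : Measurable Ssum := by
      rw [hSsum_fun]; exact Finset.measurable_sum _ fun k _ => hZmeas i k
    -- independence of `X i` and `Ssum`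
    have hsum_indep : IndepFun Ssum (X i) P := by
      have hnotmem : (Sum.inl i : I ⊕ (Σ i : I, Fin (R i))) ∉
          Finset.univ.image (fun k : Fin (R i) =>
            (Sum.inr ⟨i, k⟩ : I ⊕ (Σ i : I, Fin (R i)))) := by simp
      have h1 := hgIndep.indepFun_finsetSum_of_notMem hgmeas hnotmem
      have h2 : (∑ j ∈ Finset.univ.image (fun k : Fin (R i) =>
          (Sum.inr ⟨i, k⟩ : I ⊕ (Σ i : I, Fin (R i)))), g j) = Ssum := by
        rw [Finset.sum_image (fun x _ y _ hxy => by simpa using hxy)]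
      rwa [h2] at h1
    -- variance of the sum of copies
    have hvarSsum : variance Ssum P = (R i : ℝ) * variance (X i) P := by
      have h1 : variance Ssum P = ∑ k : Fin (R i), variance (Z i k) P := by
        rw [hSsum]
        refine IndepFun.variance_sum (fun k _ => hZ2 i k) ?_
        intro k _ l _ hkl
        have h3 := hgIndep.indepFun (i := Sum.inr ⟨i, k⟩) (j := Sum.inr ⟨i, l⟩)
          (by simp [hkl])
        simpa only [hgdef] using h3
      rw [h1]
      have h2 : ∀ k : Fin (R i), variance (Z i k) P = variance (X i) P := fun k =>
        (hZid i k).variance_eq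
      simp [h2, Finset.sum_const, nsmul_eq_mul]
    -- the measurable version of the error
    set T : Ω → ℝ := fun ω => X i ω - c * Ssum ω with hT
    have hTmeas : Measurable T := (hXmeas i).sub (hSsum_meas.const_mul c)
    have hTae : (fun ω => X i ω - sampleMean (Xc i) ω) =ᵐ[P] T := by
      have hall : ∀ᵐ ω ∂P, ∀ k : Fin (R i), Xc i k ω = Z i k ω := by
        rw [MeasureTheory.ae_all_iff]; exact fun k => hZae i k
      filter_upwards [hall] with ω hω
      simp [sampleMean, hT, hSsum_apply, hω, hc]
    have hvarT : variance (fun ω => X i ω - sampleMean (Xc i) ω) P = variance T P := by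
      have haem : AEMeasurable (fun ω => X i ω - sampleMean (Xc i) ω) P :=
        hTmeas.aemeasurable.congr hTae.symm
      exact (IdentDistrib.of_ae_eq haem hTae).variance_eq
    -- split the variance using independence
    have hS2 : MemLp (fun ω => (-c) * Ssum ω) 2 P := by
      have : MemLp Ssum 2 P := by
        rw [hSsum]; exact memLp_finsetSum' _ fun k _ => hZ2 i k
      exact this.const_mul (-c)
    have hind : IndepFun (X i) (fun ω => (-c) * Ssum ω) P :=
      hsum_indep.symm.comp measurable_id (measurable_const_mul (-c))
    have hadd := IndepFun.variance_add (hX2 i) hS2 hind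
    have hTeq : T = X i + fun ω => (-c) * Ssum ω := by
      funext ω; simp only [hT, Pi.add_apply]; ring
    rw [hvarT, hTeq, hadd]
    have hvneg : variance (fun ω => (-c) * Ssum ω) P = (R i : ℝ)⁻¹ * variance (X i) P := by
      rw [variance_const_mul, hvarSsum, hc]
      have hR0 : ((R i : ℕ) : ℝ) ≠ 0 := (hnpos i).ne'
      field_simp
    rw [hvneg]
  -- mean zero
  have hmean : ∀ i, ∫ ω, (X i ω - sampleMean (Xc i) ω) ∂P = 0 := by
    intro i
    have hXint : Integrable (X i) P := (hX2 i).integrable one_le_two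
    have hXcint : ∀ k, Integrable (Xc i k) P := fun k =>
      ((hid i k).symm.memLp_snd (hX2 i)).integrable one_le_two
    have hSMint : Integrable (sampleMean (Xc i)) P := by
      have h0 : Integrable (fun ω => ∑ k, Xc i k ω) P :=
        integrable_finset_sum _ fun k _ => hXcint k
      exact h0.const_mul ((R i : ℝ))⁻¹
    have h1 : ∫ ω, sampleMean (Xc i) ω ∂P = ∫ ω, X i ω ∂P := by
      simp only [sampleMean]
      rw [MeasureTheory.integral_const_mul, MeasureTheory.integral_finset_sum _
        fun k _ => hXcint k]
      have h2 : ∀ k : Fin (R i), ∫ ω, Xc i k ω ∂P = ∫ ω, X i ω ∂P := fun k =>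
        (hid i k).integral_eq
      simp only [h2, Finset.sum_const, Finset.card_univ, Fintype.card_fin, nsmul_eq_mul]
      have hR0 : ((R i : ℕ) : ℝ) ≠ 0 := (hnpos i).ne'
      field_simp
    rw [MeasureTheory.integral_sub hXint hSMint, h1, sub_self]
  -- positive variance of the error
  have hvpos : ∀ i, 0 < variance (fun ω => X i ω - sampleMean (Xc i) ω) P := by
    intro i
    rw [hvar i]
    have h0 : 0 ≤ (R i : ℝ)⁻¹ * variance (X i) P :=
      mul_nonneg (inv_nonneg.2 (hnpos i).le) (variance_nonneg _ _)
    linarith [hXvar i]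
  -- fourth моment via kurtosis
  have h4 : ∀ i, ∫ ω, (X i ω - sampleMean (Xc i) ω) ^ 4 ∂P
      = kurt P (fun ω => X i ω - sampleMean (Xc i) ω)
        * (variance (fun ω => X i ω - sampleMean (Xc i) ω) P) ^ 2 := by
    intro i
    rw [kurt, hmean i]
    simp only [sub_zero]
    exact (div_mul_cancel₀ _ (pow_ne_zero 2 (hvpos i).ne')).symm
  have hκ0 : 0 ≤ κtilde := by
    obtain ⟨i⟩ := (inferInstance : Nonempty I)
    refine le_trans ?_ (hκ i)
    rw [kurt]
    refine div_nonneg (integral_nonneg fun ω => ?_) (by positivity)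
    positivity
  -- bounds on the summands
  have hlow : ∀ i, variance (X i) P ≤ variance (fun ω => X i ω - sampleMean (Xc i) ω) P := by
    intro i
    rw [hvar i]
    have h0 : 0 ≤ (R i : ℝ)⁻¹ * variance (X i) P :=
      mul_nonneg (inv_nonneg.2 (hnpos i).le) (variance_nonneg _ _)
    linarith
  have hhigh : ∀ i, variance (fun ω => X i ω - sampleMean (Xc i) ω) P
      ≤ 2 * variance (X i) P := by
    intro i
    rw [hvar i]
    have h1 : (R i : ℝ)⁻¹ ≤ 1 := inv_le_one_of_one_le₀ (hn1 i)
    nlinarith [variance_nonneg (X i) P]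
  have hnum : ∀ i, ∫ ω, (X i ω - sampleMean (Xc i) ω) ^ 4 ∂P
      ≤ 4 * κtilde * (variance (X i) P) ^ 2 := by
    intro i
    rw [h4 i]
    have h1 : kurt P (fun ω => X i ω - sampleMean (Xc i) ω)
        * (variance (fun ω => X i ω - sampleMean (Xc i) ω) P) ^ 2
        ≤ κtilde * (variance (fun ω => X i ω - sampleMean (Xc i) ω) P) ^ 2 :=
      mul_le_mul_of_nonneg_right (hκ i) (sq_nonneg _)
    have h2 : (variance (fun ω => X i ω - sampleMean (Xc i) ω) P) ^ 2
        ≤ (2 * variance (X i) P) ^ 2 :=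
      pow_le_pow_left₀ (variance_nonneg _ _) (hhigh i) 2
    nlinarith [sq_nonneg (variance (fun ω => X i ω - sampleMean (Xc i) ω) P)]
  -- assemble the sums
  have hBpos : 0 < ∑ i, variance (X i) P :=
    Finset.sum_pos (fun i _ => hXvar i) Finset.univ_nonempty
  have hBD : (∑ i, variance (X i) P)
      ≤ ∑ i, variance (fun ω => X i ω - sampleMean (Xc i) ω) P :=
    Finset.sum_le_sum fun i _ => hlow i
  have hNA : (∑ i, ∫ ω, (X i ω - sampleMean (Xc i) ω) ^ 4 ∂P)
      ≤ 4 * κtilde * ∑ i, (variance (X i) P) ^ 2 := by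
    rw [Finset.mul_sum]
    exact Finset.sum_le_sum fun i _ => hnum i
  have hA4 : 0 ≤ ∑ i, (variance (X i) P) ^ 2 :=
    Finset.sum_nonneg fun i _ => sq_nonneg _
  have hmain : (∑ i, ∫ ω, (X i ω - sampleMean (Xc i) ω) ^ 4 ∂P)
        / (∑ i, variance (fun ω => X i ω - sampleMean (Xc i) ω) P) ^ 2
      ≤ (4 * κtilde * ∑ i, (variance (X i) P) ^ 2) / (∑ i, variance (X i) P) ^ 2 := by
    refine div_le_div₀ (by positivity) hNA (pow_pos hBpos 2)
      (pow_le_pow_left₀ hBpos.le hBD 2)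
  refine hmain.trans_eq ?_
  -- final algebraic identity
  have hcard : (0 : ℝ) < (Fintype.card I : ℝ) := by
    exact_mod_cast Fintype.card_pos
  have hσpos : 0 < σbar2 := by
    rw [hσbar2]; positivity
  subst hγ2
  subst hσbar2
  have hcard0 : ((Fintype.card I : ℕ) : ℝ) ≠ 0 := hcard.ne'
  have hB0 : (∑ i, variance (X i) P) ≠ 0 := hBpos.ne'
  field_simp
  ring
end

section
/- Let P ∈ ℕ and for each j ∈ {1,…,P} let γ_j > 0, ε_j > 0 and η_j > 0 be given, with V_j = η_j/ε_j, and let C > 0. For B ⊆ {1,…,P} with B ≠ {1,…,P} define α(B) = (C − Σ_{j∈B} γ_j ε_j)/(Σ_{j∉B} γ_j). Suppose B has at least two non-members, α(B) > 0, and j' ∉ B satisfies η_{j'}/α(B) > V_{j'} (equivalently, ε_{j'} > α(B)). Then α(B ∪ {j'}) < α(B). Consequently, if in addition α(B ∪ {j'}) > 0, then for every j ∉ B ∪ {j'} one has η_j/α(B ∪ {j'}) > η_j/α(B); that is, adding j' to the working set strictly increases the estimator variance of every other non-actively constrained portfolio. -/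
/-- The common allocation factor `α(B) = (C − Σ_{j∈B} γ_j ε_j)/(Σ_{j∉B} γ_j)`
for the non-actively constrained portfolios, given working set `B`. -/
noncomputable def alphaFactor {P : ℕ} (γ ε : Fin P → ℝ) (C : ℝ) (B : Finset (Fin P)) : ℝ :=
  (C - ∑ j ∈ B, γ j * ε j) / ∑ j ∈ Bᶜ, γ j

/-- Adding a violated constraint `j'` to the working set strictly decreases `α`, and hence
strictly increases the estimator variance `η_j/α` of every other non-actively
constrained portfolio. -/
theorem adding_violated_constraint_increases_other_variances
    {P : ℕ} (γ ε η V : Fin P → ℝ) (C : ℝ)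
    (hγ : ∀ j, 0 < γ j) (hε : ∀ j, 0 < ε j) (hη : ∀ j, 0 < η j)
    (hV : ∀ j, V j = η j / ε j) (hC : 0 < C)
    (B : Finset (Fin P)) (hBtwo : 2 ≤ Bᶜ.card)
    (hα : 0 < alphaFactor γ ε C B)
    (j' : Fin P) (hj'B : j' ∉ B)
    (hviol : V j' < η j' / alphaFactor γ ε C B) :
    alphaFactor γ ε C (insert j' B) < alphaFactor γ ε C B ∧
      (0 < alphaFactor γ ε C (insert j' B) →
        ∀ j ∉ insert j' B,
          η j / alphaFactor γ ε C B < η j / alphaFactor γ ε C (insert j' B)) := by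
  set α := alphaFactor γ ε C B with hαdef
  have hj'c : j' ∈ Bᶜ := Finset.mem_compl.mpr hj'B
  -- denominators
  set D : ℝ := ∑ j ∈ Bᶜ, γ j with hD
  have hDpos : 0 < D := Finset.sum_pos (fun j _ => hγ j) ⟨j', hj'c⟩
  -- remaining denominator positive: Bᶜ has at least 2 elements
  have hD'pos : 0 < D - γ j' := by
    have hsplit : D = γ j' + ∑ j ∈ Bᶜ.erase j', γ j :=
      (Finset.add_sum_erase _ _ hj'c).symm
    obtain ⟨k, hk, hkne⟩ : ∃ k ∈ Bᶜ, k ≠ j' := by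
      have h1 : 1 < Bᶜ.card := hBtwo
      obtain ⟨a, ha, b, hb, hab⟩ := Finset.one_lt_card.mp h1
      by_cases hja : a = j'
      · exact ⟨b, hb, by simp [← hja, Ne.symm hab]⟩
      · exact ⟨a, ha, hja⟩
    have : 0 < ∑ j ∈ Bᶜ.erase j', γ j :=
      Finset.sum_pos (fun j _ => hγ j) ⟨k, Finset.mem_erase.mpr ⟨hkne, hk⟩⟩
    linarith [hsplit]
  -- ε j' > α
  have hεα : α < ε j' := by
    have hVj := hV j'
    have hηj := hη j'
    have hεj := hε j'
    rw [hVj] at hviol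
    by_contra h
    push_neg at h
    have : η j' / alphaFactor γ ε C B ≤ η j' / ε j' :=
      div_le_div_of_nonneg_left (le_of_lt hηj) (hε j') h
    exact absurd hviol (not_lt.mpr this)
  -- compute numerator/denominator for insert
  have hcompl : (insert j' B)ᶜ = Bᶜ.erase j' := by
    ext x
    simp [Finset.mem_erase, Finset.mem_compl, Finset.mem_insert, and_comm, not_or]
  have hDins : ∑ j ∈ (insert j' B)ᶜ, γ j = D - γ j' := by
    rw [hcompl, hD]
    rw [Finset.sum_erase_eq_sub hj'c]
  have hNins : C - ∑ j ∈ insert j' B, γ j * ε j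
      = (C - ∑ j ∈ B, γ j * ε j) - γ j' * ε j' := by
    rw [Finset.sum_insert hj'B]; ring
  have hαval : α * D = C - ∑ j ∈ B, γ j * ε j := by
    rw [hαdef, alphaFactor, ← hD]
    field_simp
  have hins : alphaFactor γ ε C (insert j' B)
      = (α * D - γ j' * ε j') / (D - γ j') := by
    rw [alphaFactor, hDins, hNins, hαval]
  have hlt : alphaFactor γ ε C (insert j' B) < α := by
    rw [hins, div_lt_iff₀ hD'pos]
    have : γ j' * α < γ j' * ε j' := by
      exact mul_lt_mul_of_pos_left hεα (hγ j')
    nlinarith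
  refine ⟨hlt, fun hpos j _ => ?_⟩
  exact div_lt_div_of_pos_left (hη j) hpos hlt
end

section
/- Let P ∈ ℕ and for each j ∈ {1,…,P} let γ_j > 0, ε_j > 0 and η_j > 0 be given, with V_j = η_j/ε_j, and let C > 0. For B ⊆ {1,…,P} with B ≠ {1,…,P} define α(B) = (C − Σ_{j∈B} γ_j ε_j)/(Σ_{j∉B} γ_j). Suppose B has at least two non-members, α(B) > 0, ε_j ≥ α(B) for every j ∈ B (i.e. all Lagrange multipliers associated with the active constraints in B are non-negative), and j' ∉ B satisfies η_{j'}/α(B) > V_{j'} (equivalently, ε_{j'} > α(B)). Then ε_j ≥ α(B ∪ {j'}) for every j ∈ B ∪ {j'}; that is, the Lagrange multipliers associated with the active constraints remain non-negative after adding j' to the working set. -/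
/-- If all Lagrange multipliers of the active constraints are non-negative
(`ε_j ≥ α(B)` for `j ∈ B`) and `j' ∉ B` has a violated constraint
(`η_{j'}/α(B) > V_{j'}`, equivalently `ε_{j'} > α(B)`), then after adding `j'` to the
working set the multipliers remain non-negative: `ε_j ≥ α(B ∪ {j'})` for all
`j ∈ B ∪ {j'}`. -/
theorem lagrange_multipliers_remain_nonneg
    {P : ℕ} (γ ε η V : Fin P → ℝ) (C : ℝ)
    (hγ : ∀ j, 0 < γ j) (hε : ∀ j, 0 < ε j) (hη : ∀ j, 0 < η j)
    (hV : ∀ j, V j = η j / ε j) (hC : 0 < C)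
    (B : Finset (Fin P)) (hBtwo : 2 ≤ Bᶜ.card)
    (hα : 0 < alphaFactor γ ε C B)
    (hdual : ∀ j ∈ B, alphaFactor γ ε C B ≤ ε j)
    (j' : Fin P) (hj'B : j' ∉ B)
    (hviol : V j' < η j' / alphaFactor γ ε C B) :
    ∀ j ∈ insert j' B, alphaFactor γ ε C (insert j' B) ≤ ε j := by
  set α := alphaFactor γ ε C B with hαdef
  -- j' is not in B, so j' ∈ Bᶜ
  have hj'c : j' ∈ Bᶜ := Finset.mem_compl.mpr hj'B
  -- ε j' > α from the violation
  have hαε' : α < ε j' := by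
    rw [hV j'] at hviol
    exact (div_lt_div_iff_of_pos_left (hη j') (hε j') hα).mp hviol
  -- denominators
  set T := ∑ j ∈ Bᶜ, γ j with hTdef
  set T' := ∑ j ∈ Bᶜ.erase j', γ j with hT'def
  have hTsplit : T = γ j' + T' := by
    rw [hTdef, hT'def, Finset.add_sum_erase _ _ hj'c]
  have hT'pos : 0 < T' := by
    have hne : (Bᶜ.erase j').Nonempty := by
      rw [← Finset.card_pos, Finset.card_erase_of_mem hj'c]
      omega
    exact Finset.sum_pos (fun i _ => hγ i) hne
  have hTpos : 0 < T := by rw [hTsplit]; linarith [hγ j']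
  have hCS : C - ∑ j ∈ B, γ j * ε j = α * T := by
    rw [hαdef, alphaFactor, ← hTdef, div_mul_cancel₀ _ (ne_of_gt hTpos)]
  -- new alpha
  have hcompl : (insert j' B)ᶜ = Bᶜ.erase j' := Finset.compl_insert
  have hnew : alphaFactor γ ε C (insert j' B)
      = (α * T - γ j' * ε j') / T' := by
    rw [alphaFactor, hcompl, ← hT'def, Finset.sum_insert hj'B, ← hCS]; ring_nf
  have hlt : alphaFactor γ ε C (insert j' B) < α := by
    rw [hnew, div_lt_iff₀ hT'pos]
    have : γ j' * α < γ j' * ε j' :=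
      mul_lt_mul_of_pos_left hαε' (hγ j')
    nlinarith [hTsplit]
  intro j hj
  rcases Finset.mem_insert.mp hj with h | h
  · subst h; exact le_of_lt (lt_trans hlt hαε')
  · exact le_of_lt (lt_of_lt_of_le hlt (hdual j h))
end
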